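/- Let σ be a nonzero measure on the real line having a density w with ‖w‖_∞ < ∞ and with support contained in the finite interval (−w_0, w_0), 0 < w_0 < ∞, and let (P_n)_{n≥0} denote the orthonormal polynomials with respect to σ. Then for every integer N ≥ 1 and every t ∈ (−w_0, w_0): 1 / Σ_{n=0}^{N} P_n(t)² ≤ 2π · w_0 · ‖w‖_∞ / N*, where N* = N if N is odd and N* = N−1 if N is even. -/

import Mathlib

open MeasureTheory Filter Real Polynomial intervalIntegral

noncomputable section

lemma aux_int_cos (m : ℤ) (hm : m ≠ 0) : ∫ θ in (0:ℝ)..π, Real.cos (m * θ) = 0 := by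
  have hm' : (m:ℝ) ≠ 0 := Int.cast_ne_zero.mpr hm
  rw [intervalIntegral.integral_comp_mul_left (fun x => Real.cos x) hm']
  simp [Real.sin_int_mul_pi]

lemma aux_int_cos_nat (m : ℕ) : ∫ θ in (0:ℝ)..π, Real.cos (((m:ℝ)+1) * θ) = 0 := by
  have := aux_int_cos (m+1) (by omega)
  have h : ((((m:ℤ)+1 : ℤ)):ℝ) = (m:ℝ)+1 := by push_cast; ring
  rw [← h]; exact_mod_cast this

lemma aux_orth (j k : ℕ) : ∫ θ in (0:ℝ)..π, Real.cos (((j:ℝ)+1) * θ) * Real.cos (((k:ℝ)+1) * θ)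
    = if j = k then π/2 else 0 := by
  have hform : ∀ θ : ℝ, Real.cos (((j:ℝ)+1) * θ) * Real.cos (((k:ℝ)+1) * θ)
      = (Real.cos ((((j:ℝ)) - k) * θ) + Real.cos (((j:ℝ)+k+2) * θ)) / 2 := by
    intro θ
    have h1 := Real.cos_add (((j:ℝ)+1) * θ) (((k:ℝ)+1) * θ)
    have h2 := Real.cos_sub (((j:ℝ)+1) * θ) (((k:ℝ)+1) * θ)
    have e1 : ((j:ℝ)+1) * θ + ((k:ℝ)+1) * θ = ((j:ℝ)+k+2) * θ := by ring
    have e2 : ((j:ℝ)+1) * θ - ((k:ℝ)+1) * θ = ((j:ℝ)-k) * θ := by ring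
    rw [e1] at h1; rw [e2] at h2
    linarith
  simp only [hform]
  rw [intervalIntegral.integral_div]
  have hsumint : ∫ θ in (0:ℝ)..π, (Real.cos ((((j:ℝ)) - k) * θ) + Real.cos (((j:ℝ)+k+2) * θ))
      = (∫ θ in (0:ℝ)..π, Real.cos ((((j:ℝ)) - k) * θ))
        + ∫ θ in (0:ℝ)..π, Real.cos (((j:ℝ)+k+2) * θ) := by
    apply intervalIntegral.integral_add
    · exact (Real.continuous_cos.comp (continuous_const.mul continuous_id)).intervalIntegrable _ _
    · exact (Real.continuous_cos.comp (continuous_const.mul continuous_id)).intervalIntegrable _ _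
  rw [hsumint]
  have h2 : ∫ θ in (0:ℝ)..π, Real.cos (((j:ℝ)+k+2) * θ) = 0 := by
    have := aux_int_cos ((j:ℤ)+k+2) (by omega)
    have e : (((j:ℤ)+k+2 : ℤ) : ℝ) = (j:ℝ)+k+2 := by push_cast; ring
    rwa [e] at this
  rw [h2]
  by_cases hjk : j = k
  · subst hjk
    simp only [if_pos rfl, sub_self, zero_mul, Real.cos_zero]
    rw [intervalIntegral.integral_const]
    simp
  · rw [if_neg hjk]
    have h1 : ∫ θ in (0:ℝ)..π, Real.cos ((((j:ℝ)) - k) * θ) = 0 := by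
      have hne : ((j:ℤ) - k) ≠ 0 := by
        intro h; apply hjk; omega
      have := aux_int_cos ((j:ℤ)-k) hne
      have e : (((j:ℤ)-k : ℤ) : ℝ) = (j:ℝ)-k := by push_cast; ring
      rwa [e] at this
    rw [h1]; norm_num

lemma aux_sq_integral (N : ℕ) (a : ℕ → ℝ) :
    ∫ θ in (0:ℝ)..π, (1 + 2 * ∑ k ∈ Finset.range N, a k * Real.cos (((k:ℝ)+1) * θ))^2
      = π * (1 + 2 * ∑ k ∈ Finset.range N, (a k)^2) := by
  have hck : ∀ m : ℕ, Continuous fun θ : ℝ => Real.cos (((m:ℝ)+1) * θ) :=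
    fun m => Real.continuous_cos.comp (continuous_const.mul continuous_id)
  have hexp : ∀ θ : ℝ, (1 + 2 * ∑ k ∈ Finset.range N, a k * Real.cos (((k:ℝ)+1) * θ))^2
      = 1 + (∑ k ∈ Finset.range N, (4 * a k) * Real.cos (((k:ℝ)+1) * θ))
        + ∑ j ∈ Finset.range N, ∑ k ∈ Finset.range N,
            (4 * (a j * a k)) * (Real.cos (((j:ℝ)+1) * θ) * Real.cos (((k:ℝ)+1) * θ)) := by
    intro θ
    have hsq : (∑ k ∈ Finset.range N, a k * Real.cos (((k:ℝ)+1) * θ))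
        * (∑ k ∈ Finset.range N, a k * Real.cos (((k:ℝ)+1) * θ))
        = ∑ j ∈ Finset.range N, ∑ k ∈ Finset.range N,
            (a j * a k) * (Real.cos (((j:ℝ)+1) * θ) * Real.cos (((k:ℝ)+1) * θ)) := by
      rw [Finset.sum_mul_sum]
      apply Finset.sum_congr rfl; intro j _
      apply Finset.sum_congr rfl; intro k _
      ring
    have h4 : ∑ j ∈ Finset.range N, ∑ k ∈ Finset.range N,
            (4 * (a j * a k)) * (Real.cos (((j:ℝ)+1) * θ) * Real.cos (((k:ℝ)+1) * θ))
        = 4 * ∑ j ∈ Finset.range N, ∑ k ∈ Finset.range N,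
            (a j * a k) * (Real.cos (((j:ℝ)+1) * θ) * Real.cos (((k:ℝ)+1) * θ)) := by
      rw [Finset.mul_sum]
      apply Finset.sum_congr rfl; intro j _
      rw [Finset.mul_sum]
      apply Finset.sum_congr rfl; intro k _
      ring
    have h5 : ∑ k ∈ Finset.range N, (4 * a k) * Real.cos (((k:ℝ)+1) * θ)
        = 4 * ∑ k ∈ Finset.range N, a k * Real.cos (((k:ℝ)+1) * θ) := by
      rw [Finset.mul_sum]; apply Finset.sum_congr rfl; intro k _; ring
    rw [h4, h5, ← hsq]; ring
  simp only [hexp]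
  have hint1 : IntervalIntegrable (fun _ : ℝ => (1:ℝ)) MeasureTheory.volume 0 π :=
    intervalIntegrable_const
  have hint2 : IntervalIntegrable
      (fun θ : ℝ => ∑ k ∈ Finset.range N, (4 * a k) * Real.cos (((k:ℝ)+1) * θ))
      MeasureTheory.volume 0 π := by
    apply Continuous.intervalIntegrable
    exact continuous_finset_sum _ (fun k _ => continuous_const.mul (hck k))
  have hint3 : IntervalIntegrable
      (fun θ : ℝ => ∑ j ∈ Finset.range N, ∑ k ∈ Finset.range N,
          (4 * (a j * a k)) * (Real.cos (((j:ℝ)+1) * θ) * Real.cos (((k:ℝ)+1) * θ)))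
      MeasureTheory.volume 0 π := by
    apply Continuous.intervalIntegrable
    exact continuous_finset_sum _ (fun j _ => continuous_finset_sum _
      (fun k _ => continuous_const.mul ((hck j).mul (hck k))))
  rw [intervalIntegral.integral_add (hint1.add hint2) hint3,
      intervalIntegral.integral_add hint1 hint2]
  have e1 : ∫ θ in (0:ℝ)..π, (1:ℝ) = π := by simp
  have e2 : ∫ θ in (0:ℝ)..π, (∑ k ∈ Finset.range N, (4 * a k) * Real.cos (((k:ℝ)+1) * θ)) = 0 := by
    rw [intervalIntegral.integral_finset_sum]
    · apply Finset.sum_eq_zero; intro k _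
      rw [intervalIntegral.integral_const_mul, aux_int_cos_nat]; ring
    · exact fun k _ => (continuous_const.mul (hck k)).intervalIntegrable _ _
  have e3 : ∫ θ in (0:ℝ)..π, (∑ j ∈ Finset.range N, ∑ k ∈ Finset.range N,
      (4 * (a j * a k)) * (Real.cos (((j:ℝ)+1) * θ) * Real.cos (((k:ℝ)+1) * θ)))
      = 2 * π * ∑ k ∈ Finset.range N, (a k)^2 := by
    rw [intervalIntegral.integral_finset_sum (f := fun j θ => ∑ k ∈ Finset.range N,
        (4 * (a j * a k)) * (Real.cos (((j:ℝ)+1) * θ) * Real.cos (((k:ℝ)+1) * θ))) (fun j _ =>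
      (continuous_finset_sum _ (fun k _ => continuous_const.mul
        ((hck j).mul (hck k)))).intervalIntegrable _ _)]
    have : ∀ j ∈ Finset.range N,
        (∫ θ in (0:ℝ)..π, ∑ k ∈ Finset.range N,
          (4 * (a j * a k)) * (Real.cos (((j:ℝ)+1) * θ) * Real.cos (((k:ℝ)+1) * θ)))
        = 2 * π * (a j)^2 := by
      intro j hj
      rw [intervalIntegral.integral_finset_sum (f := fun k θ =>
          (4 * (a j * a k)) * (Real.cos (((j:ℝ)+1) * θ) * Real.cos (((k:ℝ)+1) * θ))) (fun k _ =>
        (continuous_const.mul ((hck j).mul (hck k))).intervalIntegrable _ _)]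
      have : ∀ k ∈ Finset.range N,
          (∫ θ in (0:ℝ)..π, (4 * (a j * a k)) * (Real.cos (((j:ℝ)+1) * θ) * Real.cos (((k:ℝ)+1) * θ)))
          = if j = k then 2 * π * (a j)^2 else 0 := by
        intro k _
        rw [intervalIntegral.integral_const_mul, aux_orth]
        by_cases h : j = k
        · subst h; rw [if_pos rfl, if_pos rfl]; ring
        · simp [h]
      rw [Finset.sum_congr rfl this, Finset.sum_ite_eq (Finset.range N) j (fun _ => 2 * π * (a j)^2),
        if_pos hj]
    rw [Finset.sum_congr rfl this, ← Finset.mul_sum]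
  rw [e1, e2, e3]; ring

lemma aux_dir_half (N : ℕ) {φ : ℝ} (h1 : 0 < φ) (h2 : φ ≤ π/2) :
    -((N:ℝ)+1) * Real.sin φ ≤ Real.sin ((2*(N:ℝ)+1) * φ) := by
  have hsφ : 0 ≤ Real.sin φ :=
    Real.sin_nonneg_of_nonneg_of_le_pi h1.le (by linarith [Real.pi_pos])
  rcases le_or_gt φ (π/(2*((N:ℝ)+1))) with hc | hc
  · have hNpos : (0:ℝ) < (N:ℝ)+1 := by positivity
    have harg1 : 0 ≤ (2*(N:ℝ)+1) * φ := by positivity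
    have harg2 : (2*(N:ℝ)+1) * φ ≤ π := by
      have : (2*(N:ℝ)+1) * φ ≤ (2*(N:ℝ)+1) * (π/(2*((N:ℝ)+1))) := by
        apply mul_le_mul_of_nonneg_left hc (by positivity)
      have h2' : (2*(N:ℝ)+1) * (π/(2*((N:ℝ)+1))) ≤ π := by
        have hq : (2*(N:ℝ)+1)/(2*((N:ℝ)+1)) ≤ 1 := by
          rw [div_le_one (by positivity)]; linarith
        calc (2*(N:ℝ)+1) * (π/(2*((N:ℝ)+1))) = ((2*(N:ℝ)+1)/(2*((N:ℝ)+1))) * π := by ring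
          _ ≤ 1 * π := mul_le_mul_of_nonneg_right hq Real.pi_pos.le
          _ = π := one_mul π
      linarith
    have := Real.sin_nonneg_of_nonneg_of_le_pi harg1 harg2
    nlinarith
  · have hs2 : 1/((N:ℝ)+1) ≤ Real.sin φ := by
      have hb := Real.mul_le_sin h1.le h2
      have : 2/π * (π/(2*((N:ℝ)+1))) ≤ 2/π * φ :=
        mul_le_mul_of_nonneg_left hc.le (by positivity; )
      have hπ := Real.pi_pos
      have he : 2/π * (π/(2*((N:ℝ)+1))) = 1/((N:ℝ)+1) := by
        field_simp
      linarith [he ▸ this]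
    have := Real.neg_one_le_sin ((2*(N:ℝ)+1) * φ)
    have hN1 : (0:ℝ) < (N:ℝ)+1 := by positivity
    have hss := mul_le_mul_of_nonneg_left hs2 hN1.le
    have hone : ((N:ℝ)+1) * (1/((N:ℝ)+1)) = 1 := by field_simp
    rw [hone] at hss
    nlinarith

lemma aux_dirichlet (N : ℕ) {φ : ℝ} (h1 : 0 < φ) (h2 : φ < π) :
    -((N:ℝ)+1) * Real.sin φ ≤ Real.sin ((2*(N:ℝ)+1) * φ) := by
  rcases le_or_gt φ (π/2) with hc | hc
  · exact aux_dir_half N h1 hc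
  · set ψ := π - φ with hψ
    have hψ1 : 0 < ψ := by simp [hψ]; linarith
    have hψ2 : ψ ≤ π/2 := by simp [hψ]; linarith
    have key := aux_dir_half N hψ1 hψ2
    have hsin : Real.sin ψ = Real.sin φ := by rw [hψ, Real.sin_pi_sub]
    have hsin2 : Real.sin ((2*(N:ℝ)+1) * ψ) = Real.sin ((2*(N:ℝ)+1) * φ) := by
      have e : (2*(N:ℝ)+1) * ψ = (2*(N:ℝ)+1) * π - (2*(N:ℝ)+1) * φ := by rw [hψ]; ring
      rw [e, Real.sin_sub]
      have hs0 : Real.sin ((2*(N:ℝ)+1) * π) = 0 := by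
        have : ((2*(N:ℝ)+1) : ℝ) = ((2*(N:ℤ)+1 : ℤ) : ℝ) := by push_cast; ring
        rw [this, Real.sin_int_mul_pi]
      have hc0 : Real.cos ((2*(N:ℝ)+1) * π) = -1 := by
        have e2 : (2*(N:ℝ)+1) * π = π + (N:ℤ) * (2 * π) := by push_cast; ring
        rw [e2, Real.cos_add_int_mul_two_pi, Real.cos_pi]
      rw [hs0, hc0]; ring
    rw [← hsin2, ← hsin]; exact key

lemma aux_sum_bound (N : ℕ) {φ : ℝ} (h1 : 0 < φ) (h2 : φ < π) :
    (N:ℝ)/2 ≤ 1 + 2 * ∑ k ∈ Finset.range N, Real.cos (((k:ℝ)+1) * φ)^2 := by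
  set s := Real.sin φ with hs
  have hspos : 0 < s := Real.sin_pos_of_pos_of_lt_pi h1 h2
  -- telescoping identity
  have htel : 2 * s * (∑ k ∈ Finset.range N, Real.cos (2*((k:ℝ)+1) * φ))
      = Real.sin ((2*(N:ℝ)+1) * φ) - Real.sin φ := by
    have hterm : ∀ k : ℕ, Real.sin ((2*((k:ℝ)+1)+1) * φ) - Real.sin ((2*(k:ℝ)+1) * φ)
        = 2 * s * Real.cos (2*((k:ℝ)+1) * φ) := by
      intro k
      have e1 : (2*((k:ℝ)+1)+1) * φ = 2*((k:ℝ)+1) * φ + φ := by ring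
      have e2 : (2*(k:ℝ)+1) * φ = 2*((k:ℝ)+1) * φ - φ := by ring
      rw [e1, e2, Real.sin_add, Real.sin_sub]
      simp only [← hs]; ring
    have := Finset.sum_range_sub (fun k => Real.sin ((2*(k:ℝ)+1) * φ)) N
    simp only [Nat.cast_add, Nat.cast_one] at this
    calc 2 * s * (∑ k ∈ Finset.range N, Real.cos (2*((k:ℝ)+1) * φ))
        = ∑ k ∈ Finset.range N, (Real.sin ((2*((k:ℝ)+1)+1) * φ) - Real.sin ((2*(k:ℝ)+1) * φ)) := by
          rw [Finset.mul_sum]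
          exact Finset.sum_congr rfl (fun k _ => (hterm k).symm)
      _ = Real.sin ((2*(N:ℝ)+1) * φ) - Real.sin ((2*(0:ℝ)+1) * φ) := by
          simpa using this
      _ = Real.sin ((2*(N:ℝ)+1) * φ) - Real.sin φ := by norm_num
  have hdir := aux_dirichlet N h1 h2
  have hSig : -((N:ℝ)+2)/2 ≤ ∑ k ∈ Finset.range N, Real.cos (2*((k:ℝ)+1) * φ) := by
    have h2s : 2 * s * (-((N:ℝ)+2)/2) ≤ 2 * s * (∑ k ∈ Finset.range N, Real.cos (2*((k:ℝ)+1) * φ)) := by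
      rw [htel]; simp only [← hs] at hdir ⊢; nlinarith
    exact le_of_mul_le_mul_left h2s (by linarith)
  have hcs : ∀ k : ℕ, Real.cos (((k:ℝ)+1) * φ)^2 = 1/2 + Real.cos (2*((k:ℝ)+1) * φ)/2 := by
    intro k
    rw [Real.cos_sq]
    congr 2
    ring
  have hsum : ∑ k ∈ Finset.range N, Real.cos (((k:ℝ)+1) * φ)^2
      = (N:ℝ)/2 + (∑ k ∈ Finset.range N, Real.cos (2*((k:ℝ)+1) * φ))/2 := by
    rw [Finset.sum_congr rfl (fun k _ => hcs k), Finset.sum_add_distrib]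
    rw [Finset.sum_const, Finset.card_range, Finset.sum_div]
    simp; ring
  rw [hsum]; linarith

lemma aux_T_natDegree_le : ∀ n : ℕ, (Polynomial.Chebyshev.T ℝ (n:ℤ)).natDegree ≤ n := by
  intro n
  induction n using Nat.strong_induction_on with
  | _ n ih =>
    match n with
    | 0 => simp [Polynomial.Chebyshev.T_zero]
    | 1 => simp [Polynomial.Chebyshev.T_one, Polynomial.natDegree_X_le]
    | (m+2) =>
      have h : (Polynomial.Chebyshev.T ℝ ((m:ℤ)+2)) =
          2 * Polynomial.X * Polynomial.Chebyshev.T ℝ ((m:ℤ)+1) - Polynomial.Chebyshev.T ℝ (m:ℤ) :=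
        Polynomial.Chebyshev.T_add_two ℝ (m:ℤ)
      have e : ((m+2 : ℕ) : ℤ) = (m:ℤ)+2 := by push_cast; ring
      rw [e, h]
      apply le_trans (Polynomial.natDegree_sub_le _ _)
      have h1 : (2 * Polynomial.X * Polynomial.Chebyshev.T ℝ ((m:ℤ)+1)).natDegree ≤ m+2 := by
        apply le_trans (Polynomial.natDegree_mul_le)
        have hX : (2 * Polynomial.X : Polynomial ℝ).natDegree ≤ 1 := by
          apply le_trans (Polynomial.natDegree_mul_le)
          simp [Polynomial.natDegree_X_le]
        have hT : (Polynomial.Chebyshev.T ℝ ((m:ℤ)+1)).natDegree ≤ m+1 := by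
          have := ih (m+1) (by omega)
          have e2 : ((m+1 : ℕ) : ℤ) = (m:ℤ)+1 := by push_cast; ring
          rwa [e2] at this
        omega
      have h2 : (Polynomial.Chebyshev.T ℝ (m:ℤ)).natDegree ≤ m := ih m (by omega)
      simp [max_le_iff]
      omega

lemma aux_span (P : ℕ → Polynomial ℝ) (hPdeg : ∀ k, (P k).natDegree = k)
    (hPlead : ∀ k, 0 < (P k).leadingCoeff) :
    ∀ (n : ℕ) (Q : Polynomial ℝ), Q.natDegree ≤ n →
      ∃ c : ℕ → ℝ, Q = ∑ k ∈ Finset.range (n+1), Polynomial.C (c k) * P k := by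
  intro n
  induction n with
  | zero =>
    intro Q hQ
    have hP0 : P 0 = Polynomial.C ((P 0).coeff 0) := (Polynomial.eq_C_of_natDegree_le_zero (hPdeg 0).le)
    have ha : (P 0).coeff 0 ≠ 0 := by
      have := hPlead 0
      rw [Polynomial.leadingCoeff, hPdeg 0] at this
      exact ne_of_gt this
    refine ⟨fun _ => Q.coeff 0 / (P 0).coeff 0, ?_⟩
    rw [Finset.sum_range_one]
    rw [Polynomial.eq_C_of_natDegree_le_zero hQ]
    nth_rewrite 2 [hP0]
    rw [← Polynomial.C_mul]
    congr 1
    field_simp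
    simp
  | succ n ih =>
    intro Q hQ
    set a := Q.coeff (n+1) / (P (n+1)).coeff (n+1) with ha
    have hlc : (P (n+1)).coeff (n+1) ≠ 0 := by
      have := hPlead (n+1)
      rw [Polynomial.leadingCoeff, hPdeg (n+1)] at this
      exact ne_of_gt this
    have hQ' : (Q - Polynomial.C a * P (n+1)).natDegree ≤ n := by
      rw [Polynomial.natDegree_le_iff_coeff_eq_zero]
      intro m hm
      rw [Polynomial.coeff_sub, Polynomial.coeff_C_mul]
      rcases Nat.lt_or_ge (n+1) m with hm2 | hm2
      · rw [Polynomial.coeff_eq_zero_of_natDegree_lt (lt_of_le_of_lt hQ hm2),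
          Polynomial.coeff_eq_zero_of_natDegree_lt (lt_of_le_of_lt (hPdeg (n+1)).le hm2)]
        ring
      · have hme : m = n+1 := by omega
        subst hme
        rw [ha]; field_simp
        ring
    obtain ⟨c, hc⟩ := ih (Q - Polynomial.C a * P (n+1)) hQ'
    refine ⟨fun k => if k = n+1 then a else c k, ?_⟩
    rw [Finset.sum_range_succ]
    beta_reduce
    rw [if_pos rfl]
    have : ∑ k ∈ Finset.range (n+1), Polynomial.C (if k = n+1 then a else c k) * P k
        = ∑ k ∈ Finset.range (n+1), Polynomial.C (c k) * P k := by
      apply Finset.sum_congr rfl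
      intro k hk
      rw [if_neg (by simp at hk; omega)]
    rw [this, ← hc]
    ring

lemma aux_integrable (w : ℝ → ℝ) (w0 W : ℝ) (hw0 : 0 < w0) (hw_meas : Measurable w)
    (hw_nn : ∀ t, 0 ≤ w t) (hW : ∀ t, w t ≤ W)
    (hsupp : ∀ t, w t ≠ 0 → t ∈ Set.Ioo (-w0) w0)
    (f : ℝ → ℝ) (hf : Continuous f) :
    Integrable f (MeasureTheory.volume.withDensity fun t => ENNReal.ofReal (w t)) := by
  have hmeas : Measurable fun t => (w t).toNNReal := hw_meas.real_toNNReal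
  have heq : (fun t => ENNReal.ofReal (w t)) = fun t => ((w t).toNNReal : ENNReal) := rfl
  rw [heq, integrable_withDensity_iff_integrable_smul hmeas]
  obtain ⟨C, hC⟩ := (isCompact_Icc (a := -w0) (b := w0)).exists_bound_of_continuousOn
    hf.continuousOn
  apply Integrable.mono' (g := (Set.Ioo (-w0) w0).indicator (fun _ => W * C))
  · rw [integrable_indicator_iff measurableSet_Ioo]
    exact integrableOn_const measure_Ioo_lt_top.ne
  · apply Measurable.aestronglyMeasurable
    exact (measurable_coe_nnreal_real.comp hmeas).smul hf.measurable
  · apply Filter.Eventually.of_forall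
    intro x
    have hval : ((w x).toNNReal : ℝ) = w x := Real.coe_toNNReal _ (hw_nn x)
    rw [NNReal.smul_def, hval, smul_eq_mul]
    by_cases hx : x ∈ Set.Ioo (-w0) w0
    · rw [Set.indicator_of_mem hx]
      have hfx : ‖f x‖ ≤ C := hC x (Set.mem_Icc_of_Ioo hx)
      have hwx : 0 ≤ w x := hw_nn x
      have : ‖w x * f x‖ = w x * ‖f x‖ := by
        rw [norm_mul, Real.norm_of_nonneg hwx]
      rw [this]
      have hCnn : 0 ≤ C := le_trans (norm_nonneg _) hfx
      have := mul_le_mul (hW x) hfx (norm_nonneg _) (le_trans hwx (hW x))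
      linarith
    · have hwx : w x = 0 := by
        by_contra h; exact hx (hsupp x h)
      rw [Set.indicator_of_notMem hx, hwx]
      simp

lemma aux_sigma_int (w : ℝ → ℝ) (w0 : ℝ) (hw_meas : Measurable w)
    (hw_nn : ∀ t, 0 ≤ w t)
    (hsupp : ∀ t, w t ≠ 0 → t ∈ Set.Ioo (-w0) w0)
    (f : ℝ → ℝ) :
    ∫ x, f x ∂(MeasureTheory.volume.withDensity fun t => ENNReal.ofReal (w t))
      = ∫ x in Set.Ioo (-w0) w0, w x * f x := by
  have hmeas : Measurable fun t => (w t).toNNReal := hw_meas.real_toNNReal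
  have heq : (fun t => ENNReal.ofReal (w t)) = fun t => ((w t).toNNReal : ENNReal) := rfl
  rw [heq, integral_withDensity_eq_integral_smul hmeas]
  have h1 : ∀ x : ℝ, (w x).toNNReal • f x = w x * f x := by
    intro x
    rw [NNReal.smul_def, Real.coe_toNNReal _ (hw_nn x), smul_eq_mul]
  simp only [h1]
  symm
  apply MeasureTheory.setIntegral_eq_integral_of_forall_compl_eq_zero
  intro x hx
  have hwx : w x = 0 := by by_contra h; exact hx (hsupp x h)
  rw [hwx]; ring

theorem stmt7 (w : ℝ → ℝ) (w0 W : ℝ) (hw0 : 0 < w0) (hw_meas : Measurable w)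
    (hw_nn : ∀ t, 0 ≤ w t) (hW : ∀ t, w t ≤ W)
    (hsupp : ∀ t, w t ≠ 0 → t ∈ Set.Ioo (-w0) w0)
    (σ : Measure ℝ)
    (hσ : σ = MeasureTheory.volume.withDensity fun t => ENNReal.ofReal (w t))
    (hσne : σ ≠ 0)
    (P : ℕ → Polynomial ℝ) (hPdeg : ∀ k, (P k).natDegree = k)
    (hPlead : ∀ k, 0 < (P k).leadingCoeff)
    (hPorth : ∀ k m, (∫ l, (P k).eval l * (P m).eval l ∂σ) = if k = m then 1 else 0)
    (N : ℕ) (hN : 1 ≤ N) :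
    ∀ t ∈ Set.Ioo (-w0) w0,
      1 / ∑ k ∈ Finset.range (N + 1), (P k).eval t ^ 2 ≤
        2 * Real.pi * w0 * W / (if Odd N then (N : ℝ) else (N : ℝ) - 1) := by
  intro t ht
  have hWnn : 0 ≤ W := le_trans (hw_nn t) (hW t)
  have htw1 : -1 < t / w0 := by
    rw [lt_div_iff₀ hw0]; nlinarith [ht.1]
  have htw2 : t / w0 < 1 := by
    rw [div_lt_one hw0]; exact ht.2
  set φ := Real.arccos (t / w0) with hφdef
  have hφ1 : 0 < φ := Real.arccos_pos.2 htw2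
  have hcosφ : Real.cos φ = t / w0 := Real.cos_arccos htw1.le htw2.le
  have hφ2 : φ < π := by
    rcases (Real.arccos_le_pi (t / w0)).lt_or_eq with h | h
    · exact h
    · exfalso
      have : Real.cos φ = -1 := by rw [hφdef, h, Real.cos_pi]
      rw [hcosφ] at this
      linarith
  have ht_eq : t = w0 * Real.cos φ := by rw [hcosφ]; field_simp
  set a : ℕ → ℝ := fun k => Real.cos (((k:ℝ)+1) * φ) with ha
  set Kt : ℝ := 1 + 2 * ∑ k ∈ Finset.range N, (a k)^2 with hKtdef
  have hKt_ge : (N:ℝ)/2 ≤ Kt := aux_sum_bound N hφ1 hφ2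
  have hNpos : (0:ℝ) < (N:ℝ) := by exact_mod_cast hN
  have hKt_pos : 0 < Kt := by
    have : (0:ℝ) ≤ ∑ k ∈ Finset.range N, (a k)^2 :=
      Finset.sum_nonneg (fun k _ => sq_nonneg _)
    rw [hKtdef]; linarith
  -- the test polynomial
  set Qp : Polynomial ℝ := Polynomial.C Kt⁻¹ * (1 + 2 * ∑ k ∈ Finset.range N,
      Polynomial.C (a k) * ((Polynomial.Chebyshev.T ℝ ((k:ℤ)+1)).comp
        (Polynomial.C w0⁻¹ * Polynomial.X))) with hQpdef
  have hdeg : Qp.natDegree ≤ N := by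
    rw [hQpdef]
    apply le_trans (Polynomial.natDegree_mul_le)
    rw [Polynomial.natDegree_C, zero_add]
    apply le_trans (Polynomial.natDegree_add_le _ _)
    rw [max_le_iff]
    constructor
    · simp
    · apply le_trans (Polynomial.natDegree_mul_le)
      have h2 : (2 : Polynomial ℝ).natDegree = 0 := Polynomial.natDegree_ofNat 2
      rw [h2, zero_add]
      apply Polynomial.natDegree_sum_le_of_forall_le
      intro k hk
      apply le_trans (Polynomial.natDegree_mul_le)
      rw [Polynomial.natDegree_C, zero_add]
      apply le_trans (Polynomial.natDegree_comp_le)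
      have hT : (Polynomial.Chebyshev.T ℝ ((k:ℤ)+1)).natDegree ≤ k+1 := by
        have := aux_T_natDegree_le (k+1)
        have e : ((k+1 : ℕ) : ℤ) = (k:ℤ)+1 := by push_cast; ring
        rwa [e] at this
      have hX : (Polynomial.C w0⁻¹ * Polynomial.X : Polynomial ℝ).natDegree ≤ 1 := by
        apply le_trans (Polynomial.natDegree_mul_le)
        simp [Polynomial.natDegree_X_le]
      have hkN : k + 1 ≤ N := by simp at hk; omega
      calc (Polynomial.Chebyshev.T ℝ ((k:ℤ)+1)).natDegree *
            (Polynomial.C w0⁻¹ * Polynomial.X : Polynomial ℝ).natDegree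
          ≤ (k+1) * 1 := Nat.mul_le_mul hT hX
        _ ≤ N := by omega
  have heval : ∀ θ : ℝ, Qp.eval (w0 * Real.cos θ)
      = Kt⁻¹ * (1 + 2 * ∑ k ∈ Finset.range N, a k * Real.cos (((k:ℝ)+1) * θ)) := by
    intro θ
    rw [hQpdef]
    simp only [Polynomial.eval_mul, Polynomial.eval_add, Polynomial.eval_one,
      Polynomial.eval_C, Polynomial.eval_ofNat, Polynomial.eval_finset_sum,
      Polynomial.eval_comp, Polynomial.eval_X]
    have hsum : ∀ k ∈ Finset.range N, a k * Polynomial.eval (w0⁻¹ * (w0 * Real.cos θ))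
        (Polynomial.Chebyshev.T ℝ ((k:ℤ)+1)) = a k * Real.cos (((k:ℝ)+1) * θ) := by
      intro k _
      congr 1
      rw [inv_mul_cancel_left₀ (ne_of_gt hw0), Polynomial.Chebyshev.T_real_cos]
      congr 1
      push_cast
      ring
    rw [Finset.sum_congr rfl hsum]
  have heval_t : Qp.eval t = 1 := by
    rw [ht_eq, heval φ]
    have : ∑ k ∈ Finset.range N, a k * Real.cos (((k:ℝ)+1) * φ)
        = ∑ k ∈ Finset.range N, (a k)^2 := by
      apply Finset.sum_congr rfl
      intro k _
      rw [ha]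
      ring
    rw [this, ← hKtdef]
    exact inv_mul_cancel₀ (ne_of_gt hKt_pos)
  -- expand in the orthonormal basis
  obtain ⟨c, hc⟩ := aux_span P hPdeg hPlead N Qp hdeg
  have hsum_eval : ∑ k ∈ Finset.range (N+1), c k * (P k).eval t = 1 := by
    rw [← heval_t, hc, Polynomial.eval_finset_sum]
    apply Finset.sum_congr rfl
    intro k _
    rw [Polynomial.eval_mul, Polynomial.eval_C]
  have hint_all : ∀ f : ℝ → ℝ, Continuous f → Integrable f σ := by
    intro f hf
    rw [hσ]
    exact aux_integrable w w0 W hw0 hw_meas hw_nn hW hsupp f hf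
  have hQint : ∫ l, (Qp.eval l)^2 ∂σ = ∑ k ∈ Finset.range (N+1), (c k)^2 := by
    have hpt : ∀ l : ℝ, (Qp.eval l)^2 = ∑ j ∈ Finset.range (N+1), ∑ k ∈ Finset.range (N+1),
        (c j * c k) * ((P j).eval l * (P k).eval l) := by
      intro l
      rw [hc, Polynomial.eval_finset_sum, sq, Finset.sum_mul_sum]
      apply Finset.sum_congr rfl; intro j _
      apply Finset.sum_congr rfl; intro k _
      rw [Polynomial.eval_mul, Polynomial.eval_C, Polynomial.eval_mul, Polynomial.eval_C]
      ring
    simp only [hpt]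
    rw [MeasureTheory.integral_finset_sum _ (fun j _ => ?_)]
    · have : ∀ j ∈ Finset.range (N+1),
          (∫ l, ∑ k ∈ Finset.range (N+1), (c j * c k) * ((P j).eval l * (P k).eval l) ∂σ)
          = (c j)^2 := by
        intro j hj
        rw [MeasureTheory.integral_finset_sum _ (fun k _ => ?_)]
        · have : ∀ k ∈ Finset.range (N+1),
              (∫ l, (c j * c k) * ((P j).eval l * (P k).eval l) ∂σ)
              = if j = k then (c j)^2 else 0 := by
            intro k _
            rw [MeasureTheory.integral_const_mul, hPorth j k]
            by_cases h : j = k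
            · subst h; rw [if_pos rfl, if_pos rfl]; ring
            · rw [if_neg h, if_neg h, mul_zero]
          rw [Finset.sum_congr rfl this, Finset.sum_ite_eq (Finset.range (N+1)) j
            (fun _ => (c j)^2), if_pos hj]
        · exact (hint_all _ ((P _).continuous.mul (P _).continuous)).const_mul _
      exact Finset.sum_congr rfl this
    · apply MeasureTheory.integrable_finset_sum
      intro k _
      exact (hint_all _ ((P _).continuous.mul (P _).continuous)).const_mul _
  -- Cauchy-Schwarz step
  set S := ∑ k ∈ Finset.range (N+1), (P k).eval t ^ 2 with hSdef
  have hCS : 1 ≤ (∫ l, (Qp.eval l)^2 ∂σ) * S := by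
    rw [hQint]
    have := Finset.sum_mul_sq_le_sq_mul_sq (Finset.range (N+1)) (fun k => c k)
      (fun k => (P k).eval t)
    rw [hsum_eval] at this
    simpa using this
  have hS_nonneg : 0 ≤ S := Finset.sum_nonneg (fun k _ => sq_nonneg _)
  have hQ_nonneg : 0 ≤ ∫ l, (Qp.eval l)^2 ∂σ := by
    rw [hQint]; exact Finset.sum_nonneg (fun k _ => sq_nonneg _)
  have hS_pos : 0 < S := by
    rcases hS_nonneg.lt_or_eq with h | h
    · exact h
    · exfalso; rw [← h, mul_zero] at hCS; linarith
  have hfirst : 1 / S ≤ ∫ l, (Qp.eval l)^2 ∂σ := by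
    rw [div_le_iff₀ hS_pos]
    exact hCS
  -- bound the integral
  have hIbound : ∫ l, (Qp.eval l)^2 ∂σ ≤ Real.pi * w0 * W / Kt := by
    set q : ℝ → ℝ := fun x => (Qp.eval x)^2 with hqdef
    have hq_cont : Continuous q := (Qp.continuous).pow 2
    have hq_nn : ∀ x, 0 ≤ q x := fun x => sq_nonneg _
    rw [hσ, aux_sigma_int w w0 hw_meas hw_nn hsupp q]
    -- integrability facts
    have hglob : Integrable (fun x => w x * q x) MeasureTheory.volume := by
      have h := aux_integrable w w0 W hw0 hw_meas hw_nn hW hsupp q hq_cont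
      have hmeas : Measurable fun t => (w t).toNNReal := hw_meas.real_toNNReal
      have heq2 : (fun t : ℝ => ENNReal.ofReal (w t)) = fun t => ((w t).toNNReal : ENNReal) := rfl
      rw [heq2, integrable_withDensity_iff_integrable_smul hmeas] at h
      have : (fun x => (w x).toNNReal • q x) = fun x => w x * q x := by
        funext x
        rw [NNReal.smul_def, Real.coe_toNNReal _ (hw_nn x), smul_eq_mul]
      rwa [this] at h
    have hwq_int : IntegrableOn (fun x => w x * q x) (Set.Ioo (-w0) w0) MeasureTheory.volume :=
      hglob.integrableOn
    have hWq_int : IntegrableOn (fun x => W * q x) (Set.Ioo (-w0) w0) MeasureTheory.volume := by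
      apply MeasureTheory.IntegrableOn.mono_set _ (Set.Ioo_subset_Icc_self)
      exact ((continuous_const.mul hq_cont).continuousOn).integrableOn_Icc
    have step1 : ∫ x in Set.Ioo (-w0) w0, w x * q x ≤ ∫ x in Set.Ioo (-w0) w0, W * q x :=
      MeasureTheory.setIntegral_mono_on hwq_int hWq_int measurableSet_Ioo
        (fun x _ => mul_le_mul_of_nonneg_right (hW x) (hq_nn x))
    have step2 : ∫ x in Set.Ioo (-w0) w0, W * q x = W * ∫ x in Set.Ioo (-w0) w0, q x :=
      MeasureTheory.integral_const_mul W q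
    have step3 : ∫ x in Set.Ioo (-w0) w0, q x = ∫ x in (-w0)..w0, q x := by
      rw [intervalIntegral.integral_of_le (by linarith), MeasureTheory.integral_Ioc_eq_integral_Ioo]
    -- substitution x = w0 cos θ
    have step4 : ∫ x in (-w0)..w0, q x
        = ∫ θ in (0:ℝ)..π, q (w0 * Real.cos θ) * (w0 * Real.sin θ) := by
      have hder : ∀ θ ∈ Set.uIcc (0:ℝ) π, HasDerivAt (fun θ : ℝ => w0 * Real.cos θ)
          (w0 * (-Real.sin θ)) θ := fun θ _ => (Real.hasDerivAt_cos θ).const_mul w0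
      have hcont : ContinuousOn (fun θ : ℝ => w0 * (-Real.sin θ)) (Set.uIcc (0:ℝ) π) :=
        (continuous_const.mul Real.continuous_sin.neg).continuousOn
      have hsub := intervalIntegral.integral_comp_mul_deriv hder hcont hq_cont
      have hL : (∫ θ in (0:ℝ)..π, (q ∘ fun θ : ℝ => w0 * Real.cos θ) θ * (w0 * (-Real.sin θ)))
          = - ∫ θ in (0:ℝ)..π, q (w0 * Real.cos θ) * (w0 * Real.sin θ) := by
        rw [← intervalIntegral.integral_neg]
        apply intervalIntegral.integral_congr
        intro θ _
        simp only [Function.comp_apply]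
        ring
      have hR : (∫ x in ((fun θ : ℝ => w0 * Real.cos θ) 0)..((fun θ : ℝ => w0 * Real.cos θ) π),
          q x) = - ∫ x in (-w0)..w0, q x := by
        have e0 : (fun θ : ℝ => w0 * Real.cos θ) 0 = w0 := by norm_num
        have eπ : (fun θ : ℝ => w0 * Real.cos θ) π = -w0 := by
          simp [Real.cos_pi]
        rw [e0, eπ, intervalIntegral.integral_symm]
      rw [hL, hR] at hsub
      linarith
    have step5 : ∫ θ in (0:ℝ)..π, q (w0 * Real.cos θ) * (w0 * Real.sin θ)
        ≤ ∫ θ in (0:ℝ)..π, w0 * q (w0 * Real.cos θ) := by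
      apply intervalIntegral.integral_mono_on Real.pi_pos.le
      · exact ((hq_cont.comp (continuous_const.mul Real.continuous_cos)).mul
          (continuous_const.mul Real.continuous_sin)).intervalIntegrable _ _
      · exact (continuous_const.mul
          (hq_cont.comp (continuous_const.mul Real.continuous_cos))).intervalIntegrable _ _
      · intro θ hθ
        have hs1 : Real.sin θ ≤ 1 := Real.sin_le_one θ
        have hs0 : 0 ≤ Real.sin θ := Real.sin_nonneg_of_nonneg_of_le_pi hθ.1 hθ.2
        have hA := hq_nn (w0 * Real.cos θ)
        nlinarith [mul_le_mul_of_nonneg_left hs1 (mul_nonneg hw0.le hA)]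
    have step6 : ∫ θ in (0:ℝ)..π, w0 * q (w0 * Real.cos θ) = w0 * (Real.pi / Kt) := by
      rw [intervalIntegral.integral_const_mul]
      have hpt : ∀ θ : ℝ, q (w0 * Real.cos θ)
          = Kt⁻¹^2 * (1 + 2 * ∑ k ∈ Finset.range N, a k * Real.cos (((k:ℝ)+1) * θ))^2 := by
        intro θ
        rw [hqdef]
        simp only
        rw [heval θ]
        ring
      simp only [hpt]
      rw [intervalIntegral.integral_const_mul, aux_sq_integral N a, ← hKtdef]
      rw [sq]
      field_simp
    have hq_int_pos : 0 ≤ ∫ x in Set.Ioo (-w0) w0, q x := by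
      apply MeasureTheory.setIntegral_nonneg measurableSet_Ioo
      intro x _
      exact hq_nn x
    have chain : ∫ x in Set.Ioo (-w0) w0, q x ≤ w0 * (Real.pi / Kt) := by
      rw [step3, step4]
      rw [← step6]
      exact step5
    calc ∫ x in Set.Ioo (-w0) w0, w x * q x
        ≤ ∫ x in Set.Ioo (-w0) w0, W * q x := step1
      _ = W * ∫ x in Set.Ioo (-w0) w0, q x := step2
      _ ≤ W * (w0 * (Real.pi / Kt)) := mul_le_mul_of_nonneg_left chain hWnn
      _ = Real.pi * w0 * W / Kt := by field_simp
  have hKtc : Real.pi * w0 * W / Kt ≤ 2 * Real.pi * w0 * W / (N:ℝ) := by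
    have h1 : Real.pi * w0 * W / Kt ≤ Real.pi * w0 * W / ((N:ℝ)/2) := by
      apply div_le_div_of_nonneg_left _ (by linarith) hKt_ge
      positivity
    have h2 : Real.pi * w0 * W / ((N:ℝ)/2) = 2 * Real.pi * w0 * W / (N:ℝ) := by
      field_simp
    linarith
  have hfinal : 2 * Real.pi * w0 * W / (N:ℝ) ≤
      2 * Real.pi * w0 * W / (if Odd N then (N : ℝ) else (N : ℝ) - 1) := by
    have hnum : 0 ≤ 2 * Real.pi * w0 * W := by positivity
    by_cases h : Odd N
    · rw [if_pos h]
    · rw [if_neg h]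
      have hNe : 2 ≤ N := by
        rcases Nat.even_or_odd N with he | ho
        · have := Nat.even_iff.1 he; omega
        · exact absurd ho h
      have hd : (1:ℝ) ≤ (N:ℝ) - 1 := by
        have : (2:ℝ) ≤ (N:ℝ) := by exact_mod_cast hNe
        linarith
      apply div_le_div_of_nonneg_left hnum (by linarith) (by linarith)
  calc 1 / S ≤ ∫ l, (Qp.eval l)^2 ∂σ := hfirst
    _ ≤ Real.pi * w0 * W / Kt := hIbound
    _ ≤ 2 * Real.pi * w0 * W / (N:ℝ) := hKtc
    _ ≤ _ := hfinal

end
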